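/- (Theorem 4.12(2): the graded pieces F_n of the filtration of H^1(S_T, ℤ) are free abelian of rank 2g(2g−1)^{n−1}(2g−2) + 1.) Let g ≥ 2 and n ≥ 1 be integers. The cokernel F_n of the coboundary, i.e. the quotient additive group (W_{n+1} → ℤ) / δ((W_n → ℤ)) of the free abelian group of ℤ-valued functions on reduced words of length n+1 by the image of δ, is torsion-free, and in fact is a free abelian group of rank 2g(2g−1)^{n−1}(2g−2) + 1: there is an additive group isomorphism F_n ≃+ (Fin (2*g*(2*g−1)^(n−1)*(2*g−2) + 1) → ℤ). -/

import Mathlib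

/-- A reduced word of length `m` over the `2g` symbols `{g_1,…,g_g, g_1⁻¹,…,g_g⁻¹}`, encoded
as elements of `ZMod (2g)` with the inverse of `a` being `a + g`: no symbol is immediately
followed by its inverse. -/
def ReducedWord (g m : ℕ) : Type :=
  { w : Fin m → ZMod (2 * g) //
    ∀ i : ℕ, (h : i + 1 < m) → w ⟨i + 1, h⟩ ≠ w ⟨i, by omega⟩ + (g : ZMod (2 * g)) }

/-- The reduced word obtained by deleting the last letter. -/
def ReducedWord.init {g m : ℕ} (w : ReducedWord g (m + 1)) : ReducedWord g m :=
  ⟨fun i => w.1 i.castSucc, fun i h => w.2 i (by omega)⟩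

/-- The reduced word obtained by deleting the first letter. -/
def ReducedWord.tail {g m : ℕ} (w : ReducedWord g (m + 1)) : ReducedWord g m :=
  ⟨fun i => w.1 i.succ, fun i h => w.2 (i + 1) (by omega)⟩

/-- The coboundary `δ : (W_m → ℤ) → (W_{m+1} → ℤ)`, `(δ f)(w) = f(init w) − f(tail w)`. -/
def coboundary (g m : ℕ) : (ReducedWord g m → ℤ) →+ (ReducedWord g (m + 1) → ℤ) where
  toFun f := fun w => f w.init - f w.tail
  map_zero' := by funext w; simp
  map_add' f₁ f₂ := by funext w; simp; ring

instance (g m : ℕ) [NeZero g] : Fintype (ReducedWord g m) :=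
  haveI : NeZero (2 * g) := ⟨by have := Nat.pos_of_ne_zero (NeZero.ne g); omega⟩
  haveI : DecidablePred fun w : Fin m → ZMod (2 * g) =>
      ∀ i : ℕ, (h : i + 1 < m) → w ⟨i + 1, h⟩ ≠ w ⟨i, by omega⟩ + (g : ZMod (2 * g)) := fun w =>
    decidable_of_iff (∀ i : Fin m, ∀ j : Fin m, (j : ℕ) = (i : ℕ) + 1 →
        w j ≠ w i + (g : ZMod (2 * g)))
      ⟨fun H i h => H ⟨i, by omega⟩ ⟨i + 1, h⟩ rfl,
       fun H i j hij => by
        rcases i with ⟨i, hi⟩; rcases j with ⟨j, hj⟩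
        simp only at hij; subst hij; exact H i hj⟩
  Subtype.fintype _

instance (g m : ℕ) : DecidableEq (ReducedWord g m) := fun a b =>
  decidable_of_iff (a.1 = b.1) Subtype.ext_iff.symm

theorem ReducedWord.ne {g m : ℕ} (w : ReducedWord g m) {i j : ℕ} (hj : j < m)
    (hij : j = i + 1) : w.1 ⟨j, hj⟩ ≠ w.1 ⟨i, by omega⟩ + (g : ZMod (2 * g)) := by
  subst hij; exact w.2 i hj

section Card
variable {g : ℕ} [NeZero g]

def glue {m : ℕ} (w : ReducedWord g m) (a : ZMod (2 * g))
    (ha : ∀ _ : 1 ≤ m, a ≠ w.1 ⟨m - 1, by omega⟩ + (g : ZMod (2 * g))) :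
    ReducedWord g (m + 1) :=
  ⟨fun i => if h : (i : ℕ) < m then w.1 ⟨i, h⟩ else a, by
    intro i h
    dsimp only
    by_cases h1 : i + 1 < m
    · rw [dif_pos h1, dif_pos (by omega : i < m)]
      exact w.2 i h1
    · have him : i < m := by omega
      rw [dif_neg (by omega), dif_pos him]
      have hi : i = m - 1 := by omega
      subst hi
      exact ha (by omega)⟩

def fiberEquiv {m : ℕ} (hm : 1 ≤ m) (w : ReducedWord g m) :
    {v : ReducedWord g (m + 1) // v.init = w} ≃
      {a : ZMod (2 * g) // a ≠ w.1 ⟨m - 1, by omega⟩ + (g : ZMod (2 * g))} where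
  toFun v := ⟨v.1.1 ⟨m, by omega⟩, by
    have h := v.1.ne (j := m) (i := m - 1) (by omega) (by omega)
    have h2 : v.1.init.1 ⟨m - 1, by omega⟩ = w.1 ⟨m - 1, by omega⟩ := by rw [v.2]
    rw [← h2]
    exact h⟩
  invFun a := ⟨glue w a.1 (fun _ => a.2), by
    apply Subtype.ext; funext i
    show (if h : ((i.castSucc : Fin (m + 1)) : ℕ) < m then w.1 ⟨i.castSucc, h⟩ else a.1) = w.1 i
    rw [dif_pos (show ((i.castSucc : Fin (m + 1)) : ℕ) < m from i.2)]
    exact congrArg w.1 (Fin.ext (by simp))⟩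
  left_inv v := by
    rcases v with ⟨v, hv⟩
    subst hv
    apply Subtype.ext; apply Subtype.ext; funext i
    show (if h : (i : ℕ) < m then v.init.1 ⟨(i : ℕ), h⟩ else v.1 ⟨m, by omega⟩) = v.1 i
    by_cases h : (i : ℕ) < m
    · rw [dif_pos h]; rfl
    · rw [dif_neg h]
      exact congrArg v.1 (Fin.ext (by have := i.isLt; simp; omega))
  right_inv a := by
    apply Subtype.ext
    show (if h : m < m then w.1 ⟨m, h⟩ else a.1) = a.1
    rw [dif_neg (lt_irrefl m)]

theorem card_fiber {m : ℕ} (hm : 1 ≤ m) (w : ReducedWord g m) :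
    Fintype.card {v : ReducedWord g (m + 1) // v.init = w} = 2 * g - 1 := by
  haveI : NeZero (2 * g) := ⟨by have := Nat.pos_of_ne_zero (NeZero.ne g); omega⟩
  rw [Fintype.card_congr (fiberEquiv hm w)]
  rw [Fintype.card_subtype_compl, Fintype.card_subtype_eq, ZMod.card]

theorem card_succ {m : ℕ} (hm : 1 ≤ m) :
    Fintype.card (ReducedWord g (m + 1)) = Fintype.card (ReducedWord g m) * (2 * g - 1) := by
  rw [← Fintype.card_congr (Equiv.sigmaFiberEquiv (ReducedWord.init (g := g) (m := m)))]
  rw [Fintype.card_sigma]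
  simp only [card_fiber hm, Finset.sum_const, Finset.card_univ, smul_eq_mul]

theorem card_one : Fintype.card (ReducedWord g 1) = 2 * g := by
  haveI : NeZero (2 * g) := ⟨by have := Nat.pos_of_ne_zero (NeZero.ne g); omega⟩
  rw [← ZMod.card (2 * g)]
  exact Fintype.card_congr
    ⟨fun w => w.1 0, fun a => ⟨fun _ => a, fun i h => absurd h (by omega)⟩,
     fun w => Subtype.ext (funext fun i => congrArg w.1 (Subsingleton.elim _ _)),
     fun a => rfl⟩

theorem card_rw {m : ℕ} (hm : 1 ≤ m) :
    Fintype.card (ReducedWord g m) = 2 * g * (2 * g - 1) ^ (m - 1) := by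
  induction m, hm using Nat.le_induction with
  | base => simp [card_one]
  | succ m hm ih =>
      rw [card_succ hm, ih]
      have h1 : m - 1 + 1 = m := by omega
      rw [mul_assoc, ← pow_succ, h1]
      simp

end Card

section Const
variable {g n : ℕ}

def chain (n : ℕ) (u v : Fin n → ZMod (2 * g)) (b : ZMod (2 * g)) : ℕ → ZMod (2 * g) :=
  fun i => if h : i < n then u ⟨i, h⟩
    else if h2 : n < i ∧ i - (n + 1) < n then v ⟨i - (n + 1), h2.2⟩ else b

theorem chain_lt {u v : Fin n → ZMod (2 * g)} {b : ZMod (2 * g)} {i : ℕ} (h : i < n) :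
    chain n u v b i = u ⟨i, h⟩ := dif_pos h

theorem chain_mid {u v : Fin n → ZMod (2 * g)} {b : ZMod (2 * g)} :
    chain n u v b n = b := by
  unfold chain
  rw [dif_neg (lt_irrefl n), dif_neg (by omega)]

theorem chain_hi {u v : Fin n → ZMod (2 * g)} {b : ZMod (2 * g)} {i : ℕ}
    (h1 : n < i) (h2 : i - (n + 1) < n) :
    chain n u v b i = v ⟨i - (n + 1), h2⟩ := by
  unfold chain
  rw [dif_neg (by omega), dif_pos ⟨h1, h2⟩]

theorem exists_third (hg : 2 ≤ g) (x y : ZMod (2 * g)) :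
    ∃ b : ZMod (2 * g), b ≠ x ∧ b ≠ y := by
  haveI : NeZero (2 * g) := ⟨by omega⟩
  by_contra hc
  push_neg at hc
  have hsub : (Finset.univ : Finset (ZMod (2 * g))) ⊆ {x, y} := by
    intro c _
    by_cases hb : c = x
    · simp [hb]
    · simp [hc c hb]
  have h1 := Finset.card_le_card hsub
  have h2 : ({x, y} : Finset (ZMod (2 * g))).card ≤ 2 := by
    apply le_trans (Finset.card_insert_le _ _)
    simp
  rw [Finset.card_univ, ZMod.card] at h1
  omega

theorem add_g_add_g (hg : 1 ≤ g) (x : ZMod (2 * g)) : x + g + g = x := by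
  have h : ((g : ZMod (2 * g)) + g) = ((2 * g : ℕ) : ZMod (2 * g)) := by push_cast; ring
  rw [add_assoc, h, ZMod.natCast_self, add_zero]

theorem constKey (hg : 2 ≤ g) (hn : 1 ≤ n) {α : Sort*} (f : ReducedWord g n → α)
    (H : ∀ w : ReducedWord g (n + 1), f w.init = f w.tail) (u v : ReducedWord g n) :
    f u = f v := by
  obtain ⟨b, hb1, hb2⟩ := exists_third hg
    (u.1 ⟨n - 1, by omega⟩ + (g : ZMod (2 * g))) (v.1 ⟨0, by omega⟩ + (g : ZMod (2 * g)))
  set c : ℕ → ZMod (2 * g) := chain n u.1 v.1 b with hc_def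
  have ht : ∀ i : ℕ, i + 1 ≤ 2 * n → c (i + 1) ≠ c i + (g : ZMod (2 * g)) := by
    intro i hi
    rcases lt_trichotomy (i + 1) n with h1 | h1 | h1
    · rw [hc_def, chain_lt h1, chain_lt (by omega : i < n)]
      exact u.2 i h1
    · rw [hc_def, h1, chain_mid, chain_lt (by omega : i < n)]
      have hi1 : i = n - 1 := by omega
      subst hi1
      exact hb1
    · rcases Nat.lt_or_ge n i with h2 | h2
      · rw [hc_def, chain_hi (by omega) (by omega), chain_hi (by omega) (by omega)]
        exact v.ne (by omega) (by omega)
      · have hi1 : i = n := by omega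
        rw [hi1]
        rw [hc_def, chain_hi (by omega) (by omega), chain_mid]
        have h0 : v.1 ⟨n + 1 - (n + 1), by omega⟩ = v.1 ⟨0, by omega⟩ :=
          congrArg v.1 (Fin.ext (by simp))
        rw [h0]
        intro hcon
        apply hb2
        rw [hcon, add_g_add_g (by omega)]
  let wnd : ∀ j, j ≤ n + 1 → ReducedWord g n :=
    fun j hj => ⟨fun i => c (j + i.1), fun i h => ht (j + i) (by omega)⟩
  have hstep : ∀ j, j ≤ n → ∀ h1 h2, f (wnd j h1) = f (wnd (j + 1) h2) := by
    intro j hj h1 h2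
    let W : ReducedWord g (n + 1) :=
      ⟨fun i => c (j + i.1), fun i h => ht (j + i) (by omega)⟩
    have hW := H W
    have e1 : W.init = wnd j h1 := Subtype.ext rfl
    have e2 : W.tail = wnd (j + 1) h2 :=
      Subtype.ext (funext fun i => congrArg c (by rw [Fin.val_succ]; omega))
    exact (congrArg f e1.symm).trans (hW.trans (congrArg f e2))
  have key : ∀ j, ∀ hj : j ≤ n + 1, f (wnd 0 (by omega)) = f (wnd j hj) := by
    intro j
    induction j with
    | zero => intro hj; rfl
    | succ j ih =>
        intro hj
        rw [ih (by omega)]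
        exact hstep j (by omega) (by omega) hj
  have hu : wnd 0 (by omega) = u := Subtype.ext (funext fun i => by
    show c (0 + i.1) = u.1 i
    rw [Nat.zero_add, hc_def]
    exact chain_lt i.2)
  have hv : wnd (n + 1) (by omega) = v := Subtype.ext (funext fun i => by
    show c ((n + 1) + i.1) = v.1 i
    rw [hc_def, chain_hi (by omega) (by omega)]
    exact congrArg v.1 (Fin.ext (by simp)))
  calc f u = f (wnd 0 (by omega)) := by rw [hu]
    _ = f (wnd (n + 1) (by omega)) := key (n + 1) (by omega)
    _ = f v := by rw [hv]

end Const


section Alg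
variable {g n : ℕ}

theorem coboundary_apply (g m : ℕ) (f : ReducedWord g m → ℤ) (w : ReducedWord g (m + 1)) :
    coboundary g m f w = f w.init - f w.tail := rfl

theorem exists_base (hg : 2 ≤ g) : Nonempty (ReducedWord g n) := by
  haveI : NeZero (2 * g) := ⟨by omega⟩
  refine ⟨⟨fun _ => 0, fun i h => ?_⟩⟩
  intro hcon
  rw [zero_add] at hcon
  have h0 : (g : ZMod (2 * g)) = 0 := hcon.symm
  rw [ZMod.natCast_eq_zero_iff] at h0
  have := Nat.le_of_dvd (by omega) h0
  omega

theorem div_key (hg : 2 ≤ g) (hn : 1 ≤ n) (k : ℤ) (hk : k ≠ 0)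
    (b : ReducedWord g (n + 1) → ℤ) (f : ReducedWord g n → ℤ)
    (hf : coboundary g n f = k • b) : ∃ f', coboundary g n f' = b := by
  obtain ⟨u₀⟩ := exists_base (n := n) hg
  have h1 : ∀ w : ReducedWord g (n + 1), f w.init - f w.tail = k * b w := by
    intro w
    have := congrFun hf w
    rwa [coboundary_apply, Pi.smul_apply, smul_eq_mul] at this
  have hmod : ∀ w : ReducedWord g (n + 1),
      ((f w.init : ZMod k.natAbs)) = ((f w.tail : ZMod k.natAbs)) := by
    intro w
    have h2 : ((f w.init - f w.tail : ℤ) : ZMod k.natAbs) = 0 := by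
      rw [h1 w]
      push_cast
      rw [show ((k : ZMod k.natAbs)) = 0 from
        (ZMod.intCast_zmod_eq_zero_iff_dvd k k.natAbs).mpr (Int.natAbs_dvd.mpr dvd_rfl)]
      ring
    push_cast at h2
    linear_combination h2
  have hdvd : ∀ u : ReducedWord g n, k ∣ f u - f u₀ := by
    intro u
    have hcst := constKey hg hn (fun w => ((f w : ZMod k.natAbs))) hmod u u₀
    have h3 : ((f u - f u₀ : ℤ) : ZMod k.natAbs) = 0 := by
      push_cast
      rw [hcst]
      ring
    rw [ZMod.intCast_zmod_eq_zero_iff_dvd] at h3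
    exact Int.natAbs_dvd.mp h3
  refine ⟨fun u => (f u - f u₀) / k, ?_⟩
  funext w
  have hiv : ∀ u, k * ((f u - f u₀) / k) = f u - f u₀ := fun u => Int.mul_ediv_cancel' (hdvd u)
  rw [coboundary_apply]
  apply mul_left_cancel₀ hk
  rw [mul_sub, hiv, hiv]
  linear_combination h1 w

noncomputable def splitEquiv {R M : Type*} [CommRing R] [AddCommGroup M] [Module R M]
    (p : Submodule R M)
    (s : (M ⧸ p) →ₗ[R] M) (hsec : ∀ z, p.mkQ (s z) = z) : M ≃ₗ[R] ↥p × (M ⧸ p) := by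
  have hmem : ∀ x : M, x - s (p.mkQ x) ∈ p := by
    intro x
    rw [← Submodule.Quotient.mk_eq_zero p, ← Submodule.mkQ_apply, map_sub, hsec, sub_self]
  exact
  { toFun := fun x => (⟨x - s (p.mkQ x), hmem x⟩, p.mkQ x)
    invFun := fun y => y.1.1 + s y.2
    map_add' := fun x y => by
      refine Prod.ext (Subtype.ext ?_) (map_add _ _ _)
      show (x + y) - s (p.mkQ (x + y)) = (x - s (p.mkQ x)) + (y - s (p.mkQ y))
      rw [map_add, map_add]
      abel
    map_smul' := fun c x => by
      refine Prod.ext (Subtype.ext ?_) (p.mkQ.map_smul c x)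
      dsimp only
      rw [p.mkQ.map_smul, s.map_smul]
      show c • x - c • s (p.mkQ x) = c • (x - s (p.mkQ x))
      rw [smul_sub]
    left_inv := fun x => by simp
    right_inv := fun y => by
      rcases y with ⟨⟨y, hy⟩, z⟩
      have h1 : p.mkQ (y + s z) = z := by
        rw [map_add, hsec, show p.mkQ y = 0 by
          rw [Submodule.mkQ_apply, Submodule.Quotient.mk_eq_zero]; exact hy, zero_add]
      refine Prod.ext (Subtype.ext ?_) ?_
      · simp [h1]
      · simpa using h1 }

end Alg

def δL (g m : ℕ) : (ReducedWord g m → ℤ) →ₗ[ℤ] (ReducedWord g (m + 1) → ℤ) where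
  toFun f := fun w => f w.init - f w.tail
  map_add' f₁ f₂ := by funext w; simp [Pi.add_apply]; ring
  map_smul' c f := by funext w; simp [Pi.smul_apply, smul_eq_mul]; ring


set_option maxHeartbeats 1000000 in
set_option synthInstance.maxHeartbeats 200000 in
/-- Theorem 4.12(2): the graded piece `F_n = (W_{n+1} → ℤ)/δ((W_n → ℤ))` of the filtration of
`H^1(S_T, ℤ)` is torsion-free, and in fact is a free abelian group of rank
`2g(2g−1)^{n−1}(2g−2) + 1`. -/
theorem graded_piece_free_abelian (g n : ℕ) (hg : 2 ≤ g) (hn : 1 ≤ n) :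
    (∀ x : (ReducedWord g (n + 1) → ℤ) ⧸ (coboundary g n).range,
      ∀ k : ℕ, k ≠ 0 → k • x = 0 → x = 0) ∧
    Nonempty (((ReducedWord g (n + 1) → ℤ) ⧸ (coboundary g n).range) ≃+
      (Fin (2 * g * (2 * g - 1) ^ (n - 1) * (2 * g - 2) + 1) → ℤ)) := by
  haveI : NeZero g := ⟨by omega⟩
  constructor
  · intro x k hk hx
    obtain ⟨b, rfl⟩ := QuotientAddGroup.mk'_surjective ((coboundary g n).range) x
    rw [← map_nsmul] at hx
    have hb : k • b ∈ (coboundary g n).range := (QuotientAddGroup.eq_zero_iff _).mp hx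
    obtain ⟨f, hf⟩ := hb
    have hf' : coboundary g n f = (k : ℤ) • b := by rw [natCast_zsmul]; exact hf
    obtain ⟨f', hf''⟩ := div_key hg hn (k : ℤ) (by exact_mod_cast hk) b f hf'
    exact (QuotientAddGroup.eq_zero_iff _).mpr ⟨f', hf''⟩
  · have hrange : (coboundary g n).range = (LinearMap.range (δL g n)).toAddSubgroup := by
      ext x
      simp only [AddMonoidHom.mem_range, Submodule.mem_toAddSubgroup, LinearMap.mem_range]
      constructor <;> rintro ⟨f, rfl⟩ <;> exact ⟨f, rfl⟩
    rw [hrange]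
    set p : Submodule ℤ (ReducedWord g (n + 1) → ℤ) := LinearMap.range (δL g n) with hp
    haveI hnzQ : NoZeroSMulDivisors ℤ ((ReducedWord g (n + 1) → ℤ) ⧸ p) := by
      refine ⟨fun {c x} hcx => ?_⟩
      by_cases hc0 : c = 0
      · exact Or.inl hc0
      refine Or.inr ?_
      obtain ⟨b, rfl⟩ := Submodule.Quotient.mk_surjective p x
      rw [← Submodule.Quotient.mk_smul, Submodule.Quotient.mk_eq_zero] at hcx
      rw [Submodule.Quotient.mk_eq_zero]
      obtain ⟨f, hf⟩ := hcx
      obtain ⟨f', hf'⟩ := div_key hg hn c hc0 b f hf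
      exact ⟨f', hf'⟩
    obtain ⟨u₀⟩ := exists_base (g := g) (n := n) hg
    set K : Submodule ℤ (ReducedWord g n → ℤ) := LinearMap.ker (δL g n) with hK
    let cm : ℤ →ₗ[ℤ] (ReducedWord g n → ℤ) :=
      { toFun := fun c _ => c, map_add' := fun _ _ => rfl, map_smul' := fun _ _ => rfl }
    have hcm : ∀ c : ℤ, cm c ∈ K := by
      intro c
      rw [hK, LinearMap.mem_ker]
      funext w
      show c - c = 0
      ring
    have hbij : Function.Bijective (LinearMap.codRestrict K cm hcm) := by
      constructor
      · intro a b hab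
        exact congrFun (Subtype.ext_iff.mp hab) u₀
      · rintro ⟨f, hf⟩
        rw [hK, LinearMap.mem_ker] at hf
        have hc : ∀ w : ReducedWord g (n + 1), f w.init = f w.tail := by
          intro w
          have h0 : f w.init - f w.tail = 0 := congrFun hf w
          omega
        exact ⟨f u₀, Subtype.ext (funext fun u => constKey hg hn f hc u₀ u)⟩
    let eK : ℤ ≃ₗ[ℤ] ↥K := LinearEquiv.ofBijective (LinearMap.codRestrict K cm hcm) hbij
    let e2 : ((ReducedWord g n → ℤ) ⧸ K) ≃ₗ[ℤ] ↥p := (δL g n).quotKerEquivRange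
    haveI : Module.Finite ℤ ↥p := Module.Finite.iff_fg.mpr (IsNoetherian.noetherian p)
    haveI hnzB : NoZeroSMulDivisors ℤ ↥p := by
      refine ⟨fun {c y} hcy => ?_⟩
      by_cases hc : c = 0
      · exact Or.inl hc
      refine Or.inr (Subtype.ext (funext fun w => ?_))
      have h0 : c • ((y : ReducedWord g (n + 1) → ℤ) w) = 0 := by
        have h1 := congrArg (fun z : ↥p => (z : ReducedWord g (n + 1) → ℤ) w) hcy
        simpa using h1
      rcases mul_eq_zero.mp (by rwa [smul_eq_mul] at h0) with h | h
      · exact absurd h hc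
      · exact h
    haveI hfreep : Module.Free ℤ ↥p := inferInstance
    haveI : Module.Finite ℤ ((ReducedWord g n → ℤ) ⧸ K) := Module.Finite.equiv e2.symm
    haveI hfreeQ : Module.Free ℤ ((ReducedWord g (n + 1) → ℤ) ⧸ p) := inferInstance
    haveI : Module.Free ℤ ((ReducedWord g n → ℤ) ⧸ K) := Module.Free.of_equiv e2.symm
    obtain ⟨s1, hs1⟩ := p.mkQ.exists_rightInverse_of_surjective
      (LinearMap.range_eq_top.mpr p.mkQ_surjective)
    let e1 := splitEquiv p s1 (fun z => LinearMap.congr_fun hs1 z)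
    obtain ⟨s2, hs2⟩ := K.mkQ.exists_rightInverse_of_surjective
      (LinearMap.range_eq_top.mpr K.mkQ_surjective)
    let e3 := splitEquiv K s2 (fun z => LinearMap.congr_fun hs2 z)
    let E : (ℤ × (ReducedWord g (n + 1) → ℤ)) ≃ₗ[ℤ]
        ((ReducedWord g n → ℤ) × ((ReducedWord g (n + 1) → ℤ) ⧸ p)) :=
      ((LinearEquiv.refl ℤ ℤ).prodCongr e1).trans
        (((LinearEquiv.prodAssoc ℤ ℤ (↥p) _).symm).trans
          ((((eK.prodCongr (e2.symm)).trans e3.symm).prodCongr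
            (LinearEquiv.refl ℤ ((ReducedWord g (n + 1) → ℤ) ⧸ p)))))
    have hfr := E.finrank_eq
    rw [Module.finrank_prod, Module.finrank_prod, Module.finrank_self,
      Module.finrank_pi, Module.finrank_pi] at hfr
    have hc1 : Fintype.card (ReducedWord g n) = 2 * g * (2 * g - 1) ^ (n - 1) := card_rw hn
    have hc2 : Fintype.card (ReducedWord g (n + 1)) =
        2 * g * (2 * g - 1) ^ (n - 1) * (2 * g - 1) := by
      rw [card_rw (by omega : 1 ≤ n + 1)]
      have h4 : n + 1 - 1 = (n - 1) + 1 := by omega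
      rw [h4, pow_succ]
      ring
    have hQ : Module.finrank ℤ ((ReducedWord g (n + 1) → ℤ) ⧸ p) =
        2 * g * (2 * g - 1) ^ (n - 1) * (2 * g - 2) + 1 := by
      have hx3 : 2 * g * (2 * g - 1) ^ (n - 1) * (2 * g - 1) =
          2 * g * (2 * g - 1) ^ (n - 1) * (2 * g - 2) + 2 * g * (2 * g - 1) ^ (n - 1) := by
        have h4 : 2 * g - 1 = (2 * g - 2) + 1 := by omega
        rw [h4, Nat.mul_add, Nat.mul_one]
      rw [hc1, hc2] at hfr
      omega
    exact ⟨(LinearEquiv.toAddEquiv (Module.finBasisOfFinrankEq ℤ _ hQ).equivFun)⟩
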